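/- arXiv:0907.5079 — 2 statements merged into one kernel-verified Lean document; each statement's English description precedes it below -/
import Mathlib

section
/- Let T, G, and H be finite graphs. Let φ : Hom(T, G × H) → Hom(T,G) × Hom(T,H) be the map induced by the two projections of the product graph (φ(α) = (u ↦ {g : (g,h) ∈ α(u) for some h}, u ↦ {h : (g,h) ∈ α(u) for some g})), and let ρ : Hom(T,G) × Hom(T,H) → Hom(T, G × H) be defined by ρ(α,β)(u) = α(u) × β(u). Then φ and ρ are well-defined order-preserving maps (the target of ρ ordered as above, the product of posets ordered componentwise), satisfying φ∘ρ = id and ρ(φ(α)) ≥ α for all α; in particular ρ is injective and Hom(T,G) × Hom(T,H) embeds as a strong deformation retract of Hom(T, G × H). -/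
/-- A graph: a vertex set with a symmetric adjacency relation (loops allowed). -/
structure LoopGraph (V : Type) where
  Adj : V → V → Prop
  symm : ∀ x y, Adj x y → Adj y x

/-- Multihomomorphisms from `G` to `H`. -/
def LoopGraph.IsMultiHom {V W : Type} (G : LoopGraph V) (H : LoopGraph W) (α : V → Set W) : Prop :=
  (∀ v, (α v).Nonempty) ∧ ∀ v w, G.Adj v w → ∀ x ∈ α v, ∀ y ∈ α w, H.Adj x y

/-- The Hom poset `Hom(G,H)`. -/
def HomPoset {V W : Type} (G : LoopGraph V) (H : LoopGraph W) : Type :=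
  {α : V → Set W // G.IsMultiHom H α}

instance {V W : Type} (G : LoopGraph V) (H : LoopGraph W) : PartialOrder (HomPoset G H) :=
  Subtype.partialOrder _

/-- The categorical product of graphs. -/
def LoopGraph.prod {V W : Type} (G : LoopGraph V) (H : LoopGraph W) : LoopGraph (V × W) where
  Adj a b := G.Adj a.1 b.1 ∧ H.Adj a.2 b.2
  symm _ _ h := ⟨G.symm _ _ h.1, H.symm _ _ h.2⟩

/-- The map `φ : Hom(T, G × H) → Hom(T,G) × Hom(T,H)` induced by the projections. -/
def phiProd {U V W : Type} (T : LoopGraph U) (G : LoopGraph V) (H : LoopGraph W)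
    (α : HomPoset T (G.prod H)) : HomPoset T G × HomPoset T H :=
  ⟨⟨fun u => {g | ∃ h, (g, h) ∈ α.1 u},
    ⟨fun u => by obtain ⟨⟨g, h⟩, hm⟩ := α.2.1 u; exact ⟨g, h, hm⟩,
     fun v w hvw x hx y hy => by
      obtain ⟨hx1, hx2⟩ := hx
      obtain ⟨hy1, hy2⟩ := hy
      exact (α.2.2 v w hvw _ hx2 _ hy2).1⟩⟩,
   ⟨fun u => {h | ∃ g, (g, h) ∈ α.1 u},
    ⟨fun u => by obtain ⟨⟨g, h⟩, hm⟩ := α.2.1 u; exact ⟨h, g, hm⟩,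
     fun v w hvw x hx y hy => by
      obtain ⟨hx1, hx2⟩ := hx
      obtain ⟨hy1, hy2⟩ := hy
      exact (α.2.2 v w hvw _ hx2 _ hy2).2⟩⟩⟩

/-- The map `ρ : Hom(T,G) × Hom(T,H) → Hom(T, G × H)`, `ρ(α,β)(u) = α(u) × β(u)`. -/
def rhoProd {U V W : Type} (T : LoopGraph U) (G : LoopGraph V) (H : LoopGraph W)
    (p : HomPoset T G × HomPoset T H) : HomPoset T (G.prod H) :=
  ⟨fun u => p.1.1 u ×ˢ p.2.1 u,
   ⟨fun u => (p.1.2.1 u).prod (p.2.2.1 u),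
    fun v w hvw x hx y hy =>
      ⟨p.1.2.2 v w hvw _ hx.1 _ hy.1, p.2.2.2 v w hvw _ hx.2 _ hy.2⟩⟩⟩

/-- `φ` and `ρ` are order-preserving, `φ ∘ ρ = id`, `ρ(φ(α)) ≥ α`;
in particular `ρ` is injective and `Hom(T,G) × Hom(T,H)` embeds as a strong
deformation retract of `Hom(T, G × H)`. -/
theorem stmt_7 {U V W : Type} [Fintype U] [Fintype V] [Fintype W]
    (T : LoopGraph U) (G : LoopGraph V) (H : LoopGraph W) :
    Monotone (phiProd T G H) ∧ Monotone (rhoProd T G H) ∧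
    (∀ p, phiProd T G H (rhoProd T G H p) = p) ∧
    (∀ α, α ≤ rhoProd T G H (phiProd T G H α)) ∧
    Function.Injective (rhoProd T G H) := by
  have hsec : ∀ p, phiProd T G H (rhoProd T G H p) = p := by
    intro ⟨a, b⟩
    refine Prod.ext (Subtype.ext (funext fun u => ?_)) (Subtype.ext (funext fun u => ?_))
    · ext g
      constructor
      · rintro ⟨h, hg, -⟩; exact hg
      · intro hg; obtain ⟨h, hh⟩ := b.2.1 u; exact ⟨h, hg, hh⟩
    · ext h
      constructor
      · rintro ⟨g, -, hh⟩; exact hh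
      · intro hh; obtain ⟨g, hg⟩ := a.2.1 u; exact ⟨g, hg, hh⟩
  refine ⟨?_, ?_, hsec, ?_, ?_⟩
  · intro α β hle
    constructor
    · intro u g ⟨h, hm⟩; exact ⟨h, hle u hm⟩
    · intro u h ⟨g, hm⟩; exact ⟨g, hle u hm⟩
  · intro p q hle u x hx
    exact ⟨hle.1 u hx.1, hle.2 u hx.2⟩
  · intro α u ⟨g, h⟩ hm
    exact ⟨⟨h, hm⟩, ⟨g, hm⟩⟩
  · intro p q h
    have := congrArg (phiProd T G H) h
    rwa [hsec, hsec] at this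
end

section
/- Let T be a finite connected graph with at least one edge, S a spanning tree of T, and L the set of lengths of the cycles formed by each edge of T not in S together with the simple path in S joining its endpoints. Let Γ be a group acting on the left on a finite graph G by graph automorphisms such that for every vertex v of G, every nonidentity γ ∈ Γ, and every l ∈ L ∪ {4}, there is no walk of length l in G from v to γ·v. Then for every β ∈ Hom(T, G/Γ), every vertex u of T, and every vertex v of G with p(v) ∈ β(u) (where p : G → G/Γ is the quotient homomorphism), there exists a unique α ∈ Hom(T, G) such that p_T(α) = β and v ∈ α(u), where p_T(α)(w) = {p(x) : x ∈ α(w)}. -/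
/-- A walk of length `l` from `v` to `w`. -/
def LoopGraph.HasWalk {V : Type} (G : LoopGraph V) (l : ℕ) (v w : V) : Prop :=
  ∃ f : ℕ → V, f 0 = v ∧ f l = w ∧ ∀ i < l, G.Adj (f i) (f (i + 1))

section Quot

variable {Γ VG : Type} [Group Γ] [MulAction Γ VG]

/-- The orbit relation of a `Γ`-action. -/
def orbRel (Γ : Type) [Group Γ] (VG : Type) [MulAction Γ VG] (v w : VG) : Prop :=
  ∃ γ : Γ, w = γ • v

/-- The quotient graph `G/Γ`: vertices are orbits, two orbits are adjacent iff they
contain adjacent representatives. -/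
def quotGraph (G : LoopGraph VG) (Γ : Type) [Group Γ] [MulAction Γ VG] :
    LoopGraph (Quot (orbRel Γ VG)) where
  Adj X Y := ∃ v w, Quot.mk _ v = X ∧ Quot.mk _ w = Y ∧ G.Adj v w
  symm X Y h := by
    obtain ⟨v, w, hv, hw, hvw⟩ := h
    exact ⟨w, v, hw, hv, G.symm _ _ hvw⟩

/-- The map `p_T : Hom(T,G) → Hom(T, G/Γ)` induced by the quotient homomorphism. -/
def quotHom {VT : Type} (T : LoopGraph VT) (G : LoopGraph VG) (Γ : Type) [Group Γ] [MulAction Γ VG]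
    (α : HomPoset T G) : HomPoset T (quotGraph G Γ) :=
  ⟨fun u => Quot.mk (orbRel Γ VG) '' α.1 u,
   ⟨fun u => (α.2.1 u).image _,
    fun v w hvw x hx y hy => by
      obtain ⟨a, ha, rfl⟩ := hx
      obtain ⟨b, hb, rfl⟩ := hy
      exact ⟨a, b, rfl, rfl, α.2.2 v w hvw a ha b hb⟩⟩⟩

/-- The action of `γ ∈ Γ` on `Hom(T,G)`, `(γ·α)(u) = γ·α(u)`. -/
def homActG {VT : Type} (T : LoopGraph VT) (G : LoopGraph VG) [Group Γ] [MulAction Γ VG]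
    (hGadj : ∀ (γ : Γ) v w, G.Adj v w → G.Adj (γ • v) (γ • w))
    (γ : Γ) (α : HomPoset T G) : HomPoset T G :=
  ⟨fun u => (γ • ·) '' α.1 u,
   ⟨fun u => (α.2.1 u).image _,
    fun v w hvw x hx y hy => by
      obtain ⟨a, ha, rfl⟩ := hx
      obtain ⟨b, hb, rfl⟩ := hy
      exact hGadj γ _ _ (α.2.2 v w hvw a ha b hb)⟩⟩

/-- The rank of a multihomomorphism. -/
noncomputable def homRank {VT : Type} [Fintype VT] (T : LoopGraph VT) {W : Type} (H : LoopGraph W)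
    (α : HomPoset T H) : ℕ :=
  ∑ u : VT, ((α.1 u).ncard - 1)

end Quot

section Aux

variable {Γ VT VG : Type} [Group Γ] [MulAction Γ VG]

lemma orbRel_equivalence : Equivalence (orbRel Γ VG) :=
  ⟨fun x => ⟨1, (one_smul Γ x).symm⟩,
   fun {x y} h => by obtain ⟨γ, rfl⟩ := h; exact ⟨γ⁻¹, (inv_smul_smul γ x).symm⟩,
   fun {x y z} h h' => by
     obtain ⟨γ, rfl⟩ := h; obtain ⟨δ, rfl⟩ := h'
     exact ⟨δ * γ, (mul_smul δ γ x).symm⟩⟩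

lemma quot_mk_eq_iff (x y : VG) :
    Quot.mk (orbRel Γ VG) x = Quot.mk (orbRel Γ VG) y ↔ ∃ γ : Γ, y = γ • x := by
  rw [Quot.eq]
  exact (orbRel_equivalence (Γ := Γ)).eqvGen_iff

lemma quot_mk_smul (γ : Γ) (x : VG) :
    Quot.mk (orbRel Γ VG) (γ • x) = Quot.mk (orbRel Γ VG) x :=
  (Quot.sound ⟨γ, rfl⟩).symm

lemma no4 (G : LoopGraph VG) (hd4 : ∀ (v : VG) (γ : Γ), γ ≠ 1 → ¬ G.HasWalk 4 v (γ • v))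
    (γ : Γ) (x a b c : VG) (h0 : G.Adj x a) (h1 : G.Adj a b) (h2 : G.Adj b c)
    (h3 : G.Adj c (γ • x)) : γ • x = x := by
  by_contra hne
  have hγ : γ ≠ 1 := by rintro rfl; rw [one_smul] at hne; exact hne rfl
  refine hd4 x γ hγ ⟨fun i => if i = 0 then x else if i = 1 then a else
    if i = 2 then b else if i = 3 then c else γ • x, by simp, by norm_num, ?_⟩
  intro i hi
  interval_cases i <;> simp [h0, h1, h2, h3]

variable (T : LoopGraph VT) (G : LoopGraph VG)

def IsTWalk (W : ℕ → VT) (n : ℕ) : Prop := ∀ i < n, T.Adj (W i) (W (i + 1))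

def IsLiftW (β : HomPoset T (quotGraph G Γ)) (W : ℕ → VT) (F : ℕ → VG) (n : ℕ) : Prop :=
  (∀ i ≤ n, Quot.mk (orbRel Γ VG) (F i) ∈ β.1 (W i)) ∧ ∀ i < n, G.Adj (F i) (F (i + 1))

variable {T G}

lemma step_lift (hGadj : ∀ (γ : Γ) v w, G.Adj v w → G.Adj (γ • v) (γ • w))
    (β : HomPoset T (quotGraph G Γ)) {a b : VT} {x : VG} {Y : Quot (orbRel Γ VG)}
    (hab : T.Adj a b) (hx : Quot.mk (orbRel Γ VG) x ∈ β.1 a) (hY : Y ∈ β.1 b) :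
    ∃ y, Quot.mk (orbRel Γ VG) y = Y ∧ G.Adj x y := by
  obtain ⟨v', w', hv', hw', hvw⟩ := β.2.2 a b hab _ hx Y hY
  obtain ⟨δ, hδ⟩ := (quot_mk_eq_iff v' x).mp hv'
  exact ⟨δ • w', by rw [quot_mk_smul]; exact hw', by rw [hδ]; exact hGadj δ _ _ hvw⟩

end Aux

section Rigid

variable {Γ VT VG : Type} [Group Γ] [MulAction Γ VG]
variable {T : LoopGraph VT} {G : LoopGraph VG}

lemma rigid (hGadj : ∀ (γ : Γ) v w, G.Adj v w → G.Adj (γ • v) (γ • w))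
    (hd4 : ∀ (v : VG) (γ : Γ), γ ≠ 1 → ¬ G.HasWalk 4 v (γ • v))
    (β : HomPoset T (quotGraph G Γ)) {W : ℕ → VT} {n : ℕ} (hW : IsTWalk T W n)
    {F F' : ℕ → VG} (hF : IsLiftW T G β W F n) (hF' : IsLiftW T G β W F' n)
    (h0 : F 0 = F' 0) :
    ∀ i ≤ n, Quot.mk (orbRel Γ VG) (F i) = Quot.mk (orbRel Γ VG) (F' i) → F i = F' i := by
  have cross : ∀ i, i + 1 ≤ n → G.Adj (F i) (F' (i + 1)) ∧ G.Adj (F' i) (F (i + 1)) := by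
    intro i
    induction i with
    | zero =>
      intro h
      constructor
      · rw [h0]; exact hF'.2 0 h
      · rw [← h0]; exact hF.2 0 h
    | succ i ih =>
      intro h
      have hi := ih (by omega)
      constructor
      · obtain ⟨c, hc, hadj⟩ := step_lift hGadj β (hW (i + 1) (by omega))
          (hF.1 (i + 1) (by omega)) (hF'.1 (i + 2) h)
        obtain ⟨γ, hγ⟩ := (quot_mk_eq_iff _ _).mp hc.symm
        have := no4 G hd4 γ (F' (i + 2)) (F' (i + 1)) (F i) (F (i + 1))
          (G.symm _ _ (hF'.2 (i + 1) (by omega))) (G.symm _ _ hi.1)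
          (hF.2 i (by omega)) (by rw [← hγ]; exact hadj)
        rw [hγ, this] at hadj
        exact hadj
      · obtain ⟨c, hc, hadj⟩ := step_lift hGadj β (hW (i + 1) (by omega))
          (hF'.1 (i + 1) (by omega)) (hF.1 (i + 2) h)
        obtain ⟨γ, hγ⟩ := (quot_mk_eq_iff _ _).mp hc.symm
        have := no4 G hd4 γ (F (i + 2)) (F (i + 1)) (F' i) (F' (i + 1))
          (G.symm _ _ (hF.2 (i + 1) (by omega))) (G.symm _ _ hi.2)
          (hF'.2 i (by omega)) (by rw [← hγ]; exact hadj)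
        rw [hγ, this] at hadj
        exact hadj
  rintro (_ | i) hi heq
  · exact h0
  · obtain ⟨γ, hγ⟩ := (quot_mk_eq_iff _ _).mp heq
    have := no4 G hd4 γ (F (i + 1)) (F i) (F' (i + 1)) (F' i)
      (G.symm _ _ (hF.2 i (by omega))) (cross i (by omega)).1
      (G.symm _ _ (hF'.2 i (by omega))) (by rw [← hγ]; exact hF'.2 i (by omega))
    rw [hγ, this]

lemma exists_lift0 (hGadj : ∀ (γ : Γ) v w, G.Adj v w → G.Adj (γ • v) (γ • w))
    (β : HomPoset T (quotGraph G Γ)) :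
    ∀ (n : ℕ) (W : ℕ → VT), IsTWalk T W n → ∀ x₀, Quot.mk (orbRel Γ VG) x₀ ∈ β.1 (W 0) →
    ∃ F, IsLiftW T G β W F n ∧ F 0 = x₀ := by
  intro n
  induction n with
  | zero =>
    intro W _ x₀ hx₀
    refine ⟨fun _ => x₀, ⟨?_, fun i hi => by omega⟩, rfl⟩
    intro i hi
    interval_cases i
    exact hx₀
  | succ n ih =>
    intro W hW x₀ hx₀
    obtain ⟨F, hF, hF0⟩ := ih W (fun i hi => hW i (by omega)) x₀ hx₀
    obtain ⟨Y, hY⟩ := β.2.1 (W (n + 1))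
    obtain ⟨y, hy, hadj⟩ := step_lift hGadj β (hW n (by omega)) (hF.1 n le_rfl) hY
    refine ⟨fun i => if i ≤ n then F i else y, ⟨?_, ?_⟩, by simp [hF0]⟩
    · intro i hi
      by_cases h : i ≤ n
      · simpa [h] using hF.1 i h
      · have : i = n + 1 := by omega
        subst this
        simpa [h, hy] using hY
    · intro i hi
      by_cases h : i < n
      · simpa [h.le, show i + 1 ≤ n from h] using hF.2 i h
      · have hin : i = n := by omega
        rw [hin]
        simpa [show ¬ (n + 1 ≤ n) from by omega] using hadj

lemma exists_lift' (hGadj : ∀ (γ : Γ) v w, G.Adj v w → G.Adj (γ • v) (γ • w))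
    (β : HomPoset T (quotGraph G Γ)) :
    ∀ (n : ℕ) (W : ℕ → VT), IsTWalk T W (n + 1) →
    ∀ x₀, Quot.mk (orbRel Γ VG) x₀ ∈ β.1 (W 0) → ∀ Y ∈ β.1 (W (n + 1)),
    ∃ F, IsLiftW T G β W F (n + 1) ∧ F 0 = x₀ ∧ Quot.mk (orbRel Γ VG) (F (n + 1)) = Y := by
  intro n
  induction n with
  | zero =>
    intro W hW x₀ hx₀ Y hY
    obtain ⟨y, hy, hadj⟩ := step_lift hGadj β (hW 0 (by omega)) hx₀ hY
    refine ⟨fun i => if i = 0 then x₀ else y, ⟨?_, ?_⟩, by simp, by simp [hy]⟩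
    · intro i hi
      interval_cases i
      · simpa using hx₀
      · simpa [hy] using hY
    · intro i hi
      interval_cases i
      simpa using hadj
  | succ n ih =>
    intro W hW x₀ hx₀ Y hY
    obtain ⟨Z, hZ⟩ := β.2.1 (W (n + 1))
    obtain ⟨F, hF, hF0, hFe⟩ := ih W (fun i hi => hW i (by omega)) x₀ hx₀ Z hZ
    obtain ⟨y, hy, hadj⟩ := step_lift hGadj β (hW (n + 1) (by omega))
      (hF.1 (n + 1) le_rfl) hY
    refine ⟨fun i => if i ≤ n + 1 then F i else y, ⟨?_, ?_⟩, by simp [hF0], ?_⟩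
    · intro i hi
      by_cases h : i ≤ n + 1
      · simpa [h] using hF.1 i h
      · have : i = n + 2 := by omega
        subst this
        simpa [h, hy] using hY
    · intro i hi
      by_cases h : i < n + 1
      · simpa [h.le, show i + 1 ≤ n + 1 from h] using hF.2 i h
      · have : i = n + 1 := by omega
        subst this
        simpa [show ¬ (n + 2 ≤ n + 1) from by omega] using hadj
    · simpa [show ¬ (n + 2 ≤ n + 1) from by omega] using hy

end Rigid

section Tree

variable {VT : Type}

def mkWalk (S : SimpleGraph VT) : (f : ℕ → VT) → (n : ℕ) →
    (∀ i < n, S.Adj (f i) (f (i + 1))) → S.Walk (f 0) (f n)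
  | _, 0, _ => SimpleGraph.Walk.nil
  | f, n + 1, h => SimpleGraph.Walk.cons (h 0 (Nat.succ_pos n))
      (mkWalk S (fun i => f (i + 1)) n (fun i hi => h (i + 1) (by omega)))

lemma mkWalk_support (S : SimpleGraph VT) :
    ∀ (n : ℕ) (f : ℕ → VT) (h : ∀ i < n, S.Adj (f i) (f (i + 1))),
    (mkWalk S f n h).support = (List.range (n + 1)).map f := by
  intro n
  induction n with
  | zero => intro f h; simp [mkWalk, List.range_succ]
  | succ n ih =>
    intro f h
    rw [mkWalk, SimpleGraph.Walk.support_cons, ih]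
    rw [List.range_succ_eq_map (n := n + 1)]
    simp [List.map_map, Function.comp_def]

lemma tree_no_closed {S : SimpleGraph VT} (hStree : S.IsTree) (W : ℕ → VT) (n : ℕ)
    (h1 : 1 ≤ n) (hW : ∀ i < n, S.Adj (W i) (W (i + 1))) (hclosed : W n = W 0)
    (hnb : ∀ i, i + 2 ≤ n → W i ≠ W (i + 2)) : False := by
  classical
  have hex : ∃ m, 0 < m ∧ ∃ j, j + m ≤ n ∧ W j = W (j + m) :=
    ⟨n, h1, 0, by omega, by simpa using hclosed.symm⟩
  obtain ⟨m, hm⟩ : ∃ m, m = Nat.find hex := ⟨_, rfl⟩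
  obtain ⟨hmpos, j, hjm, hjeq⟩ := Nat.find_spec hex
  rw [← hm] at hmpos hjm hjeq
  have hmin : ∀ m' < m, ¬ (0 < m' ∧ ∃ j, j + m' ≤ n ∧ W j = W (j + m')) :=
    fun m' hm' => Nat.find_min hex (by omega)
  have hm1 : m ≠ 1 := by
    intro h
    rw [h] at hjeq
    exact (hW j (by omega)).ne hjeq
  have hm2 : m ≠ 2 := by
    intro h
    rw [h] at hjeq
    exact hnb j (by omega) hjeq
  have hm3 : 3 ≤ m := by omega
  -- inner distinctness
  have hinj : ∀ s t, j ≤ s → s < t → t ≤ j + m → t - s < m → W s ≠ W t := by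
    intro s t hs hst ht hd heq
    refine hmin (t - s) hd ⟨by omega, s, by omega, ?_⟩
    rw [show s + (t - s) = t from by omega]
    exact heq
  -- path 1 along the walk
  have hstep1 : ∀ t < m - 2, S.Adj (W (j + 1 + t)) (W (j + 1 + t + 1)) :=
    fun t ht => hW (j + 1 + t) (by omega)
  let P1 : S.Walk (W (j + 1)) (W (j + 1 + (m - 2))) :=
    mkWalk S (fun t => W (j + 1 + t)) (m - 2) hstep1
  -- path 2 through W j
  have e1 : S.Adj (W (j + 1)) (W j) := (hW j (by omega)).symm
  have e2 : S.Adj (W j) (W (j + 1 + (m - 2))) := by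
    have h := (hW (j + m - 1) (by omega)).symm
    rw [show j + m - 1 + 1 = j + m from by omega] at h
    rw [hjeq, show j + 1 + (m - 2) = j + m - 1 from by omega]
    exact h
  have hP1 : P1.IsPath := by
    rw [SimpleGraph.Walk.isPath_def, mkWalk_support]
    refine List.Nodup.map_on ?_ List.nodup_range
    intro s hs t ht heq
    simp only [List.mem_range] at hs ht
    rcases lt_trichotomy s t with h | h | h
    · exact absurd heq (hinj (j + 1 + s) (j + 1 + t) (by omega) (by omega) (by omega) (by omega))
    · exact h
    · exact absurd heq.symm (hinj (j + 1 + t) (j + 1 + s) (by omega) (by omega) (by omega) (by omega))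
  have hP2 : (SimpleGraph.Walk.cons e1 (SimpleGraph.Walk.cons e2
      SimpleGraph.Walk.nil)).IsPath := by
    rw [SimpleGraph.Walk.isPath_def]
    simp only [SimpleGraph.Walk.support_cons, SimpleGraph.Walk.support_nil]
    refine List.nodup_cons.mpr ⟨?_, List.nodup_cons.mpr ⟨?_, List.nodup_singleton _⟩⟩
    · intro hmem
      simp only [List.mem_cons, List.not_mem_nil, or_false] at hmem
      rcases hmem with h | h
      · exact e1.ne' h.symm
      · exact hinj (j + 1) (j + 1 + (m - 2)) (by omega) (by omega) (by omega) (by omega) h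
    · intro hmem
      simp only [List.mem_cons, List.not_mem_nil, or_false] at hmem
      have := hinj j (j + 1 + (m - 2)) (by omega) (by omega) (by omega) (by omega)
      exact this hmem
  obtain ⟨q, -, hq⟩ := (SimpleGraph.isTree_iff_existsUnique_path.mp hStree).2
    (W (j + 1)) (W (j + 1 + (m - 2)))
  have hP12 : P1 = SimpleGraph.Walk.cons e1 (SimpleGraph.Walk.cons e2
      SimpleGraph.Walk.nil) := by rw [hq P1 hP1, hq _ hP2]
  have hsup := congrArg SimpleGraph.Walk.support hP12
  rw [mkWalk_support] at hsup
  simp only [SimpleGraph.Walk.support_cons, SimpleGraph.Walk.support_nil] at hsup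
  have hlen := congrArg List.length hsup
  simp only [List.length_map, List.length_range, List.length_cons,
    List.length_singleton, List.length_nil] at hlen
  have hm4 : m = 4 := by omega
  rw [hm4] at hsup
  norm_num [List.range_succ] at hsup
  exact hnb j (by omega) (by rw [show j + 2 = j + 1 + 1 from by omega]; exact hsup.symm)

end Tree

section Closed

variable {Γ VT VG : Type} [Group Γ] [MulAction Γ VG]
variable {T : LoopGraph VT} {G : LoopGraph VG}

open Classical in
noncomputable def ntc (S : SimpleGraph VT) (W : ℕ → VT) (n : ℕ) : ℕ :=
  ((Finset.range n).filter (fun i => ¬ S.Adj (W i) (W (i + 1)))).card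

lemma closed_lift
    (hGadj : ∀ (γ : Γ) v w, G.Adj v w → G.Adj (γ • v) (γ • w))
    (S : SimpleGraph VT) (hStree : S.IsTree)
    (hSsub : ∀ a b, S.Adj a b → T.Adj a b)
    (hdisc : ∀ (v : VG) (γ : Γ), γ ≠ 1 → ∀ l : ℕ,
      ((∃ a b, T.Adj a b ∧ ¬ S.Adj a b ∧ l = S.dist a b + 1) ∨ l = 4) →
      ¬ G.HasWalk l v (γ • v))
    (β : HomPoset T (quotGraph G Γ)) :
    ∀ (k n : ℕ) (W : ℕ → VT), ntc S W n ≤ k → IsTWalk T W n → W n = W 0 →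
    ∀ x₀, Quot.mk (orbRel Γ VG) x₀ ∈ β.1 (W 0) →
    ∃ F, IsLiftW T G β W F n ∧ F 0 = x₀ ∧ F n = x₀ := by
  classical
  intro k
  induction k using Nat.strong_induction_on with
  | _ k IHk =>
  intro n
  induction n using Nat.strong_induction_on with
  | _ n IHn =>
  intro W hntc hW hcl x₀ hx₀
  rcases Nat.eq_zero_or_pos n with hn0 | hn
  · subst hn0
    exact ⟨fun _ => x₀, ⟨fun i hi => by interval_cases i; exact hx₀,
      fun i hi => by omega⟩, rfl, rfl⟩
  by_cases hbt : ∃ i, i + 2 ≤ n ∧ W i = W (i + 2)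
  · -- backtrack removal
    obtain ⟨i, hi2, hieq⟩ := hbt
    set W' : ℕ → VT := fun j => if j ≤ i then W j else W (j + 2) with hW'def
    have hW'i : ∀ j, j ≤ i → W' j = W j := fun j hj => by simp [hW'def, hj]
    have hW'g : ∀ j, i < j → W' j = W (j + 2) := fun j hj => by
      simp [hW'def, Nat.not_le.mpr hj]
    have hW' : IsTWalk T W' (n - 2) := by
      intro j hj
      rcases lt_trichotomy j i with h | h | h
      · rw [hW'i j (by omega), hW'i (j + 1) (by omega)]
        exact hW j (by omega)
      · subst h
        rw [hW'i j le_rfl, hW'g (j + 1) (by omega), hieq]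
        exact hW (j + 2) (by omega)
      · rw [hW'g j h, hW'g (j + 1) (by omega)]
        exact hW (j + 2) (by omega)
    have hcl' : W' (n - 2) = W' 0 := by
      rw [hW'i 0 (by omega)]
      rcases Nat.lt_or_ge i (n - 2) with h | h
      · rw [hW'g (n - 2) h, show n - 2 + 2 = n from by omega, hcl]
      · have hieqn : i = n - 2 := by omega
        rw [hW'i (n - 2) (by omega), ← hieqn, hieq, show i + 2 = n from by omega, hcl]
    have hcard : ntc S W' (n - 2) ≤ ntc S W n := by
      unfold ntc
      apply Finset.card_le_card_of_injOn (fun j => if j < i then j else j + 2)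
      · intro j hj
        simp only [Finset.mem_coe, Finset.mem_filter, Finset.mem_range] at hj ⊢
        obtain ⟨hj1, hj2⟩ := hj
        rcases Nat.lt_or_ge j i with h | h
        · rw [hW'i j (by omega), hW'i (j + 1) (by omega)] at hj2
          rw [if_pos h]
          exact ⟨by omega, hj2⟩
        · rw [if_neg (by omega)]
          refine ⟨by omega, ?_⟩
          rcases Nat.eq_or_lt_of_le h with h' | h'
          · rw [hW'i j (by omega), hW'g (j + 1) (by omega), ← h', hieq] at hj2
            rw [show j + 2 + 1 = j + 1 + 2 from by omega, ← h']
            exact hj2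
          · rw [hW'g j h', hW'g (j + 1) (by omega)] at hj2
            rw [show j + 2 + 1 = j + 1 + 2 from by omega]
            exact hj2
      · intro a ha b hb hab
        simp only at hab
        split_ifs at hab <;> omega
    obtain ⟨F', hF', hF'0, hF'e⟩ := IHn (n - 2) (by omega) W' (le_trans hcard hntc)
      hW' hcl' x₀ (by rw [hW'i 0 (by omega)]; exact hx₀)
    obtain ⟨Z, hZ⟩ := β.2.1 (W (i + 1))
    obtain ⟨z, hz, hadjz⟩ := step_lift hGadj β (hW i (by omega))
      (by rw [← hW'i i le_rfl]; exact hF'.1 i (by omega)) hZ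
    obtain ⟨F, hFval⟩ : ∃ F : ℕ → VG, ∀ j, F j =
        if j ≤ i then F' j else if j = i + 1 then z else F' (j - 2) :=
      ⟨_, fun _ => rfl⟩
    refine ⟨F, ⟨?_, ?_⟩, ?_, ?_⟩
    · intro j hj
      rw [hFval j]
      rcases Nat.lt_or_ge j (i + 1) with h | h
      · rw [if_pos (by omega)]
        have := hF'.1 j (by omega)
        rwa [hW'i j (by omega)] at this
      rcases Nat.eq_or_lt_of_le h with h' | h'
      · rw [if_neg (by omega), if_pos (by omega), hz, ← h']
        exact hZ
      · rw [if_neg (by omega), if_neg (by omega)]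
        have := hF'.1 (j - 2) (by omega)
        rcases Nat.lt_or_ge i (j - 2) with h'' | h''
        · rwa [hW'g (j - 2) h'', show j - 2 + 2 = j from by omega] at this
        · have hji : j - 2 = i := by omega
          have hWW : W (j - 2) = W j := by
            rw [hji, hieq, show i + 2 = j from by omega]
          rw [hW'i (j - 2) h'', hWW] at this
          exact this
    · intro j hj
      rw [hFval j, hFval (j + 1)]
      rcases Nat.lt_or_ge j i with h | h
      · rw [if_pos (by omega), if_pos (by omega)]
        exact hF'.2 j (by omega)
      rcases Nat.eq_or_lt_of_le h with h' | h'
      · rw [if_pos (by omega), if_neg (by omega), if_pos (by omega), ← h']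
        exact hadjz
      rcases Nat.eq_or_lt_of_le h' with h'' | h''
      · rw [if_neg (by omega), if_pos (by omega), if_neg (by omega),
          if_neg (by omega), show j + 1 - 2 = i from by omega]
        exact G.symm _ _ hadjz
      · rw [if_neg (by omega), if_neg (by omega), if_neg (by omega),
          if_neg (by omega)]
        have := hF'.2 (j - 2) (by omega)
        rw [show j - 2 + 1 = j + 1 - 2 from by omega] at this
        exact this
    · rw [hFval 0, if_pos (by omega : (0:ℕ) ≤ i)]
      exact hF'0
    · rw [hFval n, if_neg (by omega), if_neg (by omega)]
      exact hF'e
  · -- no backtrack: find a non-tree step and splice in the tree path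
    push_neg at hbt
    by_cases hallS : ∀ i < n, S.Adj (W i) (W (i + 1))
    · exact (tree_no_closed hStree W n hn hallS hcl hbt).elim
    push_neg at hallS
    obtain ⟨i, hi, hnS⟩ := hallS
    have hTab : T.Adj (W i) (W (i + 1)) := hW i hi
    obtain ⟨d, hd⟩ : ∃ d, d = S.dist (W i) (W (i + 1)) := ⟨_, rfl⟩
    obtain ⟨q, hq⟩ := SimpleGraph.Reachable.exists_walk_length_eq_dist
      (hStree.isConnected (W i) (W (i + 1)))
    rw [← hd] at hq
    set W' : ℕ → VT := fun j => if j ≤ i then W j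
      else if j ≤ i + d then q.getVert (j - i) else W (j - d + 1) with hW'def
    have hW'lo : ∀ j, j ≤ i → W' j = W j := fun j hj => by simp [hW'def, hj]
    have hW'mid : ∀ j, i ≤ j → j ≤ i + d → W' j = q.getVert (j - i) := by
      intro j hj1 hj2
      rcases Nat.eq_or_lt_of_le hj1 with h | h
      · rw [hW'lo j (by omega), ← h, show i - i = 0 from by omega,
          SimpleGraph.Walk.getVert_zero]
      · simp [hW'def, show ¬ j ≤ i from by omega, hj2]
    have hW'hi : ∀ j, i + d < j → W' j = W (j - d + 1) := by
      intro j hj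
      simp [hW'def, show ¬ j ≤ i from by omega, show ¬ j ≤ i + d from by omega]
    have hW'id : W' (i + d) = W (i + 1) := by
      rw [hW'mid (i + d) (by omega) le_rfl, show i + d - i = d from by omega,
        ← hq, SimpleGraph.Walk.getVert_length]
    have hmids : ∀ j, i ≤ j → j < i + d → S.Adj (W' j) (W' (j + 1)) := by
      intro j h1 h2
      rw [hW'mid j h1 (by omega), hW'mid (j + 1) (by omega) (by omega),
        show j + 1 - i = j - i + 1 from by omega]
      exact q.adj_getVert_succ (by rw [hq]; omega)
    have hW' : IsTWalk T W' (n - 1 + d) := by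
      intro j hj
      rcases Nat.lt_or_ge j i with h | h
      · rw [hW'lo j (by omega), hW'lo (j + 1) (by omega)]
        exact hW j (by omega)
      · rcases Nat.lt_or_ge j (i + d) with h' | h'
        · exact hSsub _ _ (hmids j h h')
        · rcases Nat.eq_or_lt_of_le h' with h'' | h''
          · rw [← h'', hW'id, hW'hi (i + d + 1) (by omega),
              show i + d + 1 - d + 1 = i + 2 from by omega]
            exact hW (i + 1) (by omega)
          · rw [hW'hi j h'', hW'hi (j + 1) (by omega),
              show j + 1 - d + 1 = j - d + 1 + 1 from by omega]
            exact hW (j - d + 1) (by omega)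
    have hcl' : W' (n - 1 + d) = W' 0 := by
      rw [hW'lo 0 (by omega)]
      rcases Nat.lt_or_ge i (n - 1) with h | h
      · rw [hW'hi (n - 1 + d) (by omega), show n - 1 + d - d + 1 = n from by omega, hcl]
      · rw [show n - 1 + d = i + d from by omega, hW'id,
          show i + 1 = n from by omega, hcl]
    have himem : i ∈ (Finset.range n).filter (fun j => ¬ S.Adj (W j) (W (j + 1))) := by
      simp only [Finset.mem_filter, Finset.mem_range]
      exact ⟨hi, hnS⟩
    have hnk : 1 ≤ ntc S W n := by
      unfold ntc
      exact Finset.card_pos.mpr ⟨i, himem⟩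
    have hout : ∀ j ∈ (Finset.range (n - 1 + d)).filter
        (fun j => ¬ S.Adj (W' j) (W' (j + 1))), j < i ∨ i + d ≤ j := by
      intro j hj
      simp only [Finset.mem_filter, Finset.mem_range] at hj
      by_contra hcon
      push_neg at hcon
      exact hj.2 (hmids j (by omega) (by omega))
    have hcard : ntc S W' (n - 1 + d) ≤ ntc S W n - 1 := by
      unfold ntc
      rw [← Finset.card_erase_of_mem himem]
      apply Finset.card_le_card_of_injOn (fun j => if j < i then j else j - d + 1)
      · intro j hj
        have houtj := hout j hj
        simp only [Finset.mem_coe, Finset.mem_filter, Finset.mem_range] at hj ⊢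
        obtain ⟨hj1, hj2⟩ := hj
        rcases houtj with h | h
        · rw [hW'lo j (by omega), hW'lo (j + 1) (by omega)] at hj2
          rw [if_pos h]
          refine Finset.mem_erase.mpr ⟨by omega, ?_⟩
          simp only [Finset.mem_filter, Finset.mem_range]
          exact ⟨by omega, hj2⟩
        · have e1 : W' j = W (j - d + 1) := by
            rcases Nat.eq_or_lt_of_le h with h' | h'
            · rw [← h', hW'id, show i + d - d + 1 = i + 1 from by omega]
            · exact hW'hi j h'
          rw [e1, hW'hi (j + 1) (by omega),
            show j + 1 - d + 1 = j - d + 1 + 1 from by omega] at hj2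
          rw [if_neg (by omega)]
          refine Finset.mem_erase.mpr ⟨by omega, ?_⟩
          simp only [Finset.mem_filter, Finset.mem_range]
          exact ⟨by omega, hj2⟩
      · intro a ha b hb hab
        have ha' := hout a ha
        have hb' := hout b hb
        simp only at hab
        split_ifs at hab <;> omega
    obtain ⟨F', hF', hF'0, hF'e⟩ := IHk (k - 1) (by omega) (n - 1 + d) W'
      (by omega) hW' hcl' x₀ (by rw [hW'lo 0 (by omega)]; exact hx₀)
    -- the key adjacency across the non-tree edge
    have hxy : G.Adj (F' i) (F' (i + d)) := by
      obtain ⟨y₂, hy₂, hadj₂⟩ := step_lift hGadj β hTab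
        (by have := hF'.1 i (by omega); rwa [hW'lo i le_rfl] at this)
        (by have := hF'.1 (i + d) (by omega); rwa [hW'id] at this)
      obtain ⟨γ, hγ⟩ := (quot_mk_eq_iff (F' (i + d)) y₂).mp hy₂.symm
      have hy2eq : γ • F' (i + d) = F' (i + d) := by
        by_contra hne
        have hγ1 : γ ≠ 1 := by rintro rfl; rw [one_smul] at hne; exact hne rfl
        refine hdisc (F' (i + d)) γ hγ1 (d + 1)
          (Or.inl ⟨W i, W (i + 1), hTab, hnS, by rw [hd]⟩) ?_
        obtain ⟨R, hRval⟩ : ∃ R : ℕ → VG, ∀ t, R t =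
            if t ≤ d then F' (i + (d - t)) else γ • F' (i + d) := ⟨_, fun _ => rfl⟩
        have hR0 : R 0 = F' (i + d) := by rw [hRval]; simp
        have hRe : R (d + 1) = γ • F' (i + d) := by
          rw [hRval]
          simp [show ¬ (d + 1 ≤ d) from by omega]
        refine ⟨R, hR0, hRe, ?_⟩
        intro t ht
        rw [hRval t, hRval (t + 1)]
        rcases Nat.lt_or_ge t d with h | h
        · rw [if_pos (by omega), if_pos (by omega)]
          have := hF'.2 (i + (d - t - 1)) (by omega)
          rw [show i + (d - t - 1) + 1 = i + (d - t) from by omega] at this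
          rw [show d - (t + 1) = d - t - 1 from by omega]
          exact G.symm _ _ this
        · have ht' : t = d := by omega
          rw [if_pos (by omega), if_neg (by omega), ht',
            show d - d = 0 from by omega, ← hγ]
          simpa using hadj₂
      rw [hγ, hy2eq] at hadj₂
      exact hadj₂
    obtain ⟨F, hFval⟩ : ∃ F : ℕ → VG, ∀ j, F j =
        if j ≤ i then F' j else F' (j + d - 1) := ⟨_, fun _ => rfl⟩
    refine ⟨F, ⟨?_, ?_⟩, ?_, ?_⟩
    · intro j hj
      rw [hFval j]
      rcases Nat.lt_or_ge j (i + 1) with h | h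
      · rw [if_pos (by omega)]
        have := hF'.1 j (by omega)
        rwa [hW'lo j (by omega)] at this
      rcases Nat.eq_or_lt_of_le h with h' | h'
      · rw [if_neg (by omega), show j + d - 1 = i + d from by omega, ← h']
        have := hF'.1 (i + d) (by omega)
        rwa [hW'id] at this
      · rw [if_neg (by omega)]
        have := hF'.1 (j + d - 1) (by omega)
        rwa [hW'hi (j + d - 1) (by omega),
          show j + d - 1 - d + 1 = j from by omega] at this
    · intro j hj
      rw [hFval j, hFval (j + 1)]
      rcases Nat.lt_or_ge j i with h | h
      · rw [if_pos (by omega), if_pos (by omega)]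
        exact hF'.2 j (by omega)
      rcases Nat.eq_or_lt_of_le h with h' | h'
      · rw [if_pos (by omega), if_neg (by omega), ← h',
          show i + 1 + d - 1 = i + d from by omega]
        exact hxy
      · rw [if_neg (by omega), if_neg (by omega)]
        have := hF'.2 (j + d - 1) (by omega)
        rw [show j + d - 1 + 1 = j + 1 + d - 1 from by omega] at this
        exact this
    · rw [hFval 0, if_pos (by omega : (0:ℕ) ≤ i)]
      exact hF'0
    · rw [hFval n, if_neg (by omega), show n + d - 1 = n - 1 + d from by omega]
      exact hF'e

end Closed

section Cross

variable {Γ VT VG : Type} [Group Γ] [MulAction Γ VG]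
variable {T : LoopGraph VT} {G : LoopGraph VG}

lemma cross_walk
    (hGadj : ∀ (γ : Γ) v w, G.Adj v w → G.Adj (γ • v) (γ • w))
    (S : SimpleGraph VT) (hStree : S.IsTree)
    (hSsub : ∀ a b, S.Adj a b → T.Adj a b)
    (hdisc : ∀ (v : VG) (γ : Γ), γ ≠ 1 → ∀ l : ℕ,
      ((∃ a b, T.Adj a b ∧ ¬ S.Adj a b ∧ l = S.dist a b + 1) ∨ l = 4) →
      ¬ G.HasWalk l v (γ • v))
    (β : HomPoset T (quotGraph G Γ))
    {u w : VT} {v : VG} {n m : ℕ} {W1 W2 : ℕ → VT} {f g : ℕ → VG}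
    (hW1 : IsTWalk T W1 n) (hW2 : IsTWalk T W2 m)
    (h10 : W1 0 = u) (h1e : W1 n = w) (h20 : W2 0 = u) (h2e : W2 m = w)
    (hf : IsLiftW T G β W1 f n) (hg : IsLiftW T G β W2 g m)
    (hf0 : f 0 = v) (hg0 : g 0 = v)
    (heq : Quot.mk (orbRel Γ VG) (f n) = Quot.mk (orbRel Γ VG) (g m)) :
    f n = g m := by
  have hd4 : ∀ (x : VG) (γ : Γ), γ ≠ 1 → ¬ G.HasWalk 4 x (γ • x) :=
    fun x γ hγ => hdisc x γ hγ 4 (Or.inr rfl)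
  obtain ⟨Z, hZval⟩ : ∃ Z : ℕ → VT, ∀ j, Z j =
      if j ≤ n then W1 (n - j) else W2 (j - n) := ⟨_, fun _ => rfl⟩
  obtain ⟨H, hHval⟩ : ∃ H : ℕ → VG, ∀ j, H j =
      if j ≤ n then f (n - j) else g (j - n) := ⟨_, fun _ => rfl⟩
  have hZlo : ∀ j, j ≤ n → Z j = W1 (n - j) := fun j hj => by rw [hZval, if_pos hj]
  have hHlo : ∀ j, j ≤ n → H j = f (n - j) := fun j hj => by rw [hHval, if_pos hj]
  have hZhi : ∀ j, n ≤ j → Z j = W2 (j - n) := by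
    intro j hj
    rcases Nat.eq_or_lt_of_le hj with h | h
    · rw [hZval, if_pos (by omega), ← h, show n - n = 0 from by omega, h10, h20]
    · rw [hZval, if_neg (by omega)]
  have hHhi : ∀ j, n ≤ j → H j = g (j - n) := by
    intro j hj
    rcases Nat.eq_or_lt_of_le hj with h | h
    · rw [hHval, if_pos (by omega), ← h, show n - n = 0 from by omega, hf0, hg0]
    · rw [hHval, if_neg (by omega)]
  have hZT : IsTWalk T Z (n + m) := by
    intro j hj
    rcases Nat.lt_or_ge j n with h | h
    · rw [hZlo j (by omega), hZlo (j + 1) (by omega)]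
      have := hW1 (n - j - 1) (by omega)
      rw [show n - j - 1 + 1 = n - j from by omega] at this
      rw [show n - (j + 1) = n - j - 1 from by omega]
      exact T.symm _ _ this
    · rw [hZhi j h, hZhi (j + 1) (by omega), show j + 1 - n = j - n + 1 from by omega]
      exact hW2 (j - n) (by omega)
  have hZcl : Z (n + m) = Z 0 := by
    rw [hZhi (n + m) (by omega), show n + m - n = m from by omega, h2e,
      hZlo 0 (by omega), show n - 0 = n from by omega, h1e]
  have hH : IsLiftW T G β Z H (n + m) := by
    constructor
    · intro j hj
      rcases le_or_gt j n with h | h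
      · rw [hHlo j h, hZlo j h]
        exact hf.1 (n - j) (by omega)
      · rw [hHhi j (by omega), hZhi j (by omega)]
        exact hg.1 (j - n) (by omega)
    · intro j hj
      rcases Nat.lt_or_ge j n with h | h
      · rw [hHlo j (by omega), hHlo (j + 1) (by omega)]
        have := hf.2 (n - j - 1) (by omega)
        rw [show n - j - 1 + 1 = n - j from by omega] at this
        rw [show n - (j + 1) = n - j - 1 from by omega]
        exact G.symm _ _ this
      · rw [hHhi j h, hHhi (j + 1) (by omega), show j + 1 - n = j - n + 1 from by omega]
        exact hg.2 (j - n) (by omega)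
  have hH0 : H 0 = f n := by
    rw [hHlo 0 (by omega), show n - 0 = n from by omega]
  have hHe : H (n + m) = g m := by
    rw [hHhi (n + m) (by omega), show n + m - n = m from by omega]
  obtain ⟨K, hK, hK0, hKe⟩ := closed_lift hGadj S hStree hSsub hdisc β
    (ntc S Z (n + m)) (n + m) Z le_rfl hZT hZcl (f n)
    (by rw [hZlo 0 (by omega), show n - 0 = n from by omega]; exact hf.1 n le_rfl)
  have := rigid hGadj hd4 β hZT hH hK (by rw [hH0, hK0]) (n + m) le_rfl
    (by rw [hHe, hKe]; exact heq.symm)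
  rw [hHe, hKe] at this
  exact this.symm

end Cross


/-- under the walk condition on lengths in `L ∪ {4}`, every
multihomomorphism `β ∈ Hom(T, G/Γ)` lifts uniquely through `p_T` once the lift of
one vertex is prescribed: given `u ∈ V(T)` and `v ∈ V(G)` with `p(v) ∈ β(u)`, there
is a unique `α ∈ Hom(T,G)` with `p_T(α) = β` and `v ∈ α(u)`. -/
theorem stmt_18 {Γ VT VG : Type} [Group Γ] [Fintype VT] [Fintype VG] [MulAction Γ VG]
    (T : LoopGraph VT) (G : LoopGraph VG)
    (hGadj : ∀ (γ : Γ) v w, G.Adj v w → G.Adj (γ • v) (γ • w))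
    -- T is connected with at least one edge
    (hTconn : ∀ a b : VT, ∃ l, T.HasWalk l a b)
    (hedge : ∃ a b, T.Adj a b)
    -- S is a spanning tree of T
    (S : SimpleGraph VT) (hStree : S.IsTree)
    (hSsub : ∀ a b, S.Adj a b → T.Adj a b)
    -- the walk condition, with L the set of fundamental cycle lengths
    (hdisc : ∀ (v : VG) (γ : Γ), γ ≠ 1 → ∀ l : ℕ,
      ((∃ a b, T.Adj a b ∧ ¬ S.Adj a b ∧ l = S.dist a b + 1) ∨ l = 4) →
      ¬ G.HasWalk l v (γ • v)) :
    ∀ (β : HomPoset T (quotGraph G Γ)) (u : VT) (v : VG),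
      Quot.mk (orbRel Γ VG) v ∈ β.1 u →
      ∃! α : HomPoset T G, quotHom T G Γ α = β ∧ v ∈ α.1 u := by
  intro β u v hv
  classical
  have hd4 : ∀ (x : VG) (γ : Γ), γ ≠ 1 → ¬ G.HasWalk 4 x (γ • x) :=
    fun x γ hγ => hdisc x γ hγ 4 (Or.inr rfl)
  -- u has a neighbour in T
  obtain ⟨s, hus⟩ : ∃ s, T.Adj u s := by
    obtain ⟨a, b, hab⟩ := hedge
    obtain ⟨l, fw, hf0, hfl, hstep⟩ := hTconn u a
    rcases Nat.eq_zero_or_pos l with h | h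
    · subst h
      exact ⟨b, by rw [← hf0, hfl]; exact hab⟩
    · exact ⟨fw 1, by rw [← hf0]; exact hstep 0 h⟩
  -- the candidate lift
  set A : VT → Set VG := fun w => {x | ∃ n W F, W 0 = u ∧ W n = w ∧ IsTWalk T W n ∧
    IsLiftW T G β W F n ∧ F 0 = v ∧ F n = x} with hAdef
  have hmemA : ∀ w x, x ∈ A w → Quot.mk (orbRel Γ VG) x ∈ β.1 w := by
    rintro w x ⟨n, W, F, hW0, hWn, hWT, hF, hF0, hFn⟩
    rw [← hWn, ← hFn]
    exact hF.1 n le_rfl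
  have hAuniq : ∀ w x y, x ∈ A w → y ∈ A w →
      Quot.mk (orbRel Γ VG) x = Quot.mk (orbRel Γ VG) y → x = y := by
    rintro w x y ⟨n, W1, f, h10, h1e, hWT1, hf, hf0, rfl⟩
      ⟨m, W2, g, h20, h2e, hWT2, hg, hg0, rfl⟩ heq
    exact cross_walk hGadj S hStree hSsub hdisc β hWT1 hWT2 h10 h1e h20 h2e
      hf hg hf0 hg0 heq
  have hAsurj : ∀ w Y, Y ∈ β.1 w → ∃ x ∈ A w, Quot.mk (orbRel Γ VG) x = Y := by
    intro w Y hY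
    obtain ⟨l, Wf, hWf0, hWfl, hWfstep⟩ := hTconn u w
    rcases Nat.eq_zero_or_pos l with h | h
    · subst h
      have huw : u = w := by rw [← hWf0, hWfl]
      obtain ⟨Wuu, hWuu⟩ : ∃ Wuu : ℕ → VT, ∀ j, Wuu j = if j = 1 then s else u :=
        ⟨_, fun _ => rfl⟩
      have hTW : IsTWalk T Wuu 2 := by
        intro i hi
        interval_cases i
        · rw [hWuu 0, hWuu 1, if_neg (by omega), if_pos rfl]
          exact hus
        · rw [hWuu 1, hWuu 2, if_pos rfl, if_neg (by omega)]
          exact T.symm _ _ hus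
      have h0 : Wuu 0 = u := by rw [hWuu 0, if_neg (by omega)]
      have h2 : Wuu 2 = w := by rw [hWuu 2, if_neg (by omega)]; exact huw
      obtain ⟨F, hF, hF0, hFe⟩ := exists_lift' hGadj β 1 Wuu hTW v
        (by rw [h0]; exact hv) Y (by rw [h2]; exact hY)
      exact ⟨F 2, ⟨2, Wuu, F, h0, h2, hTW, hF, hF0, rfl⟩, hFe⟩
    · obtain ⟨l', rfl⟩ : ∃ l', l = l' + 1 := ⟨l - 1, by omega⟩
      obtain ⟨F, hF, hF0, hFe⟩ := exists_lift' hGadj β l' Wf hWfstep v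
        (by rw [hWf0]; exact hv) Y (by rw [hWfl]; exact hY)
      exact ⟨F (l' + 1), ⟨l' + 1, Wf, F, hWf0, hWfl, hWfstep, hF, hF0, rfl⟩, hFe⟩
  have hAne : ∀ w, (A w).Nonempty := by
    intro w
    obtain ⟨Y, hY⟩ := β.2.1 w
    obtain ⟨x, hx, -⟩ := hAsurj w Y hY
    exact ⟨x, hx⟩
  have hAadj : ∀ a b, T.Adj a b → ∀ x ∈ A a, ∀ y ∈ A b, G.Adj x y := by
    intro a b hab x hx y hy
    obtain ⟨n, W, F, hW0, hWn, hWT, hF, hF0, hFn⟩ := hx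
    have hab' : T.Adj (W n) b := by rw [hWn]; exact hab
    obtain ⟨z, hz, hadj⟩ := step_lift hGadj β hab' (hF.1 n le_rfl) (hmemA b y hy)
    -- z lies in A b via the extended walk
    obtain ⟨W2, hW2⟩ : ∃ W2 : ℕ → VT, ∀ j, W2 j = if j ≤ n then W j else b :=
      ⟨_, fun _ => rfl⟩
    obtain ⟨F2, hF2⟩ : ∃ F2 : ℕ → VG, ∀ j, F2 j = if j ≤ n then F j else z :=
      ⟨_, fun _ => rfl⟩
    have hzA : z ∈ A b := by
      refine ⟨n + 1, W2, F2, ?_, ?_, ?_, ⟨?_, ?_⟩, ?_, ?_⟩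
      · rw [hW2 0, if_pos (by omega)]; exact hW0
      · rw [hW2 (n + 1), if_neg (by omega)]
      · intro i hi
        rcases Nat.lt_or_ge i n with h | h
        · rw [hW2 i, if_pos (by omega), hW2 (i + 1), if_pos (by omega)]
          exact hWT i h
        · have hin : i = n := by omega
          rw [hW2 i, if_pos (by omega), hW2 (i + 1), if_neg (by omega), hin]
          exact hab'
      · intro i hi
        rcases le_or_gt i n with h | h
        · rw [hF2 i, if_pos h, hW2 i, if_pos h]
          exact hF.1 i h
        · have hin : i = n + 1 := by omega
          rw [hF2 i, if_neg (by omega), hW2 i, if_neg (by omega), hz]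
          exact hmemA b y hy
      · intro i hi
        rcases Nat.lt_or_ge i n with h | h
        · rw [hF2 i, if_pos (by omega), hF2 (i + 1), if_pos (by omega)]
          exact hF.2 i h
        · have hin : i = n := by omega
          rw [hF2 i, if_pos (by omega), hF2 (i + 1), if_neg (by omega), hin]
          exact hadj
      · rw [hF2 0, if_pos (by omega)]; exact hF0
      · rw [hF2 (n + 1), if_neg (by omega)]
    have hzy : z = y := hAuniq b z y hzA hy hz
    rw [← hFn, ← hzy]
    exact hadj
  have hvA : v ∈ A u := by
    refine ⟨0, fun _ => u, fun _ => v, rfl, rfl, fun i hi => by omega,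
      ⟨?_, fun i hi => by omega⟩, rfl, rfl⟩
    intro i hi
    interval_cases i
    exact hv
  have hquot : quotHom T G Γ (⟨A, hAne, hAadj⟩ : HomPoset T G) = β := by
    apply Subtype.ext
    funext w
    apply Set.ext
    intro Y
    constructor
    · rintro ⟨x, hx, rfl⟩
      exact hmemA w x hx
    · intro hY
      obtain ⟨x, hx, hxY⟩ := hAsurj w Y hY
      exact ⟨x, hx, hxY⟩
  refine ⟨⟨A, hAne, hAadj⟩, ⟨hquot, hvA⟩, ?_⟩
  rintro α' ⟨hq', hv'⟩
  have horb : ∀ (t : VT) (z : VG), z ∈ α'.1 t → Quot.mk (orbRel Γ VG) z ∈ β.1 t := by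
    intro t z hz
    rw [← hq']
    exact ⟨z, hz, rfl⟩
  have hsub1 : ∀ w x, x ∈ A w → x ∈ α'.1 w := by
    rintro w x ⟨n, W, F, hW0, hWn, hWT, hF, hF0, hFn⟩
    have key : ∀ i, i ≤ n → F i ∈ α'.1 (W i) := by
      intro i
      induction i with
      | zero =>
        intro _
        rw [hF0, hW0]
        exact hv'
      | succ i ih =>
        intro hi
        have hFi := ih (by omega)
        have hYmem : Quot.mk (orbRel Γ VG) (F (i + 1)) ∈ β.1 (W (i + 1)) :=
          hF.1 (i + 1) hi
        rw [← hq'] at hYmem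
        obtain ⟨z, hzmem, hzq⟩ := hYmem
        obtain ⟨γ, hγ⟩ := (quot_mk_eq_iff (F (i + 1)) z).mp hzq.symm
        have hadj1 : G.Adj (F i) z :=
          α'.2.2 (W i) (W (i + 1)) (hWT i (by omega)) (F i) hFi z hzmem
        have hfix : γ • F (i + 1) = F (i + 1) :=
          no4 G hd4 γ (F (i + 1)) (F i) (F (i + 1)) (F i)
            (G.symm _ _ (hF.2 i (by omega))) (hF.2 i (by omega))
            (G.symm _ _ (hF.2 i (by omega))) (by rw [← hγ]; exact hadj1)
        rw [hγ, hfix] at hzmem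
        exact hzmem
    rw [← hFn, ← hWn]
    exact key n le_rfl
  have hsub2 : ∀ w x, x ∈ α'.1 w → x ∈ A w := by
    intro w x hx
    obtain ⟨l, Wf, hWf0, hWfl, hWfstep⟩ := hTconn u w
    rcases Nat.eq_zero_or_pos l with h | h
    · subst h
      have huw : u = w := by rw [← hWf0, hWfl]
      obtain ⟨zs, hzs⟩ := α'.2.1 s
      obtain ⟨Wuu, hWuu⟩ : ∃ Wuu : ℕ → VT, ∀ j, Wuu j = if j = 1 then s else u :=
        ⟨_, fun _ => rfl⟩
      obtain ⟨Fv, hFv⟩ : ∃ Fv : ℕ → VG, ∀ j, Fv j =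
          if j = 0 then v else if j = 1 then zs else x := ⟨_, fun _ => rfl⟩
      have hxu : x ∈ α'.1 u := by rw [huw]; exact hx
      refine ⟨2, Wuu, Fv, by rw [hWuu 0, if_neg (by omega)],
        by rw [hWuu 2, if_neg (by omega)]; exact huw, ?_, ⟨?_, ?_⟩,
        by rw [hFv 0, if_pos rfl], by rw [hFv 2, if_neg (by omega), if_neg (by omega)]⟩
      · intro i hi
        interval_cases i
        · rw [hWuu 0, hWuu 1, if_neg (by omega), if_pos rfl]
          exact hus
        · rw [hWuu 1, hWuu 2, if_pos rfl, if_neg (by omega)]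
          exact T.symm _ _ hus
      · intro i hi
        interval_cases i
        · rw [hFv 0, if_pos rfl, hWuu 0, if_neg (by omega)]
          exact hv
        · rw [hFv 1, if_neg (by omega), if_pos rfl, hWuu 1, if_pos rfl]
          exact horb s zs hzs
        · rw [hFv 2, if_neg (by omega), if_neg (by omega), hWuu 2, if_neg (by omega)]
          exact horb u x hxu
      · intro i hi
        interval_cases i
        · rw [hFv 0, if_pos rfl, hFv 1, if_neg (by omega), if_pos rfl]
          exact α'.2.2 u s hus v hv' zs hzs
        · rw [hFv 1, if_neg (by omega), if_pos rfl, hFv 2, if_neg (by omega),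
            if_neg (by omega)]
          exact α'.2.2 s u (T.symm _ _ hus) zs hzs x hxu
    · choose c hc using α'.2.1
      obtain ⟨Fv, hFv⟩ : ∃ Fv : ℕ → VG, ∀ j, Fv j =
          if j = 0 then v else if j = l then x else c (Wf j) := ⟨_, fun _ => rfl⟩
      have hmem : ∀ j ≤ l, Fv j ∈ α'.1 (Wf j) := by
        intro j hj
        rw [hFv j]
        by_cases h0 : j = 0
        · rw [if_pos h0, h0, hWf0]
          exact hv'
        by_cases hl : j = l
        · rw [if_neg h0, if_pos hl, hl, hWfl]
          exact hx
        · rw [if_neg h0, if_neg hl]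
          exact hc (Wf j)
      refine ⟨l, Wf, Fv, hWf0, hWfl, hWfstep, ⟨?_, ?_⟩,
        by rw [hFv 0, if_pos rfl], by rw [hFv l, if_neg (by omega), if_pos rfl]⟩
      · intro i hi
        exact horb (Wf i) (Fv i) (hmem i hi)
      · intro i hi
        exact α'.2.2 (Wf i) (Wf (i + 1)) (hWfstep i hi) (Fv i) (hmem i (by omega))
          (Fv (i + 1)) (hmem (i + 1) (by omega))
  apply Subtype.ext
  funext w
  apply Set.ext
  intro x
  exact ⟨hsub2 w x, hsub1 w x⟩
end
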